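/- Let Θ be a topologically reasonable family of subsets of ω^ω. Then every set in Θ is Miller measurable if and only if for every X ∈ Θ there exists a Miller tree T with [T] ⊆ X or [T] ∩ X = ∅. -/

import Mathlib

/-- `T` is a tree of finite sequences of natural numbers: closed under initial segments. -/
def IsTreeN (T : Set (List ℕ)) : Prop :=
  ∀ t ∈ T, ∀ k : ℕ, t.take k ∈ T

/-- The set of immediate successors of `t` in `T`. -/
def succs (T : Set (List ℕ)) (t : List ℕ) : Set ℕ :=
  { k | t ++ [k] ∈ T }

/-- `t` is a splitting node of `T`: it lies in `T` and has at least two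
immediate successors in `T`. -/
def SplitNodeN (T : Set (List ℕ)) (t : List ℕ) : Prop :=
  t ∈ T ∧ ∃ k l : ℕ, k ≠ l ∧ k ∈ succs T t ∧ l ∈ succs T t

/-- `T` is a Miller (superperfect) tree: a nonempty tree in which every node
extends to a splitting node, and every splitting node has infinitely many
immediate successors. -/
def IsMiller (T : Set (List ℕ)) : Prop :=
  IsTreeN T ∧ T.Nonempty ∧ (∀ t ∈ T, ∃ s, t <+: s ∧ SplitNodeN T s) ∧
  (∀ t : List ℕ, SplitNodeN T t → (succs T t).Infinite)

/-- The body `[T]` of a tree: all infinite branches whose finite initial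
segments all lie in `T`. -/
def bodyN (T : Set (List ℕ)) : Set (ℕ → ℕ) :=
  { x | ∀ n : ℕ, (List.ofFn fun i : Fin n => x i) ∈ T }

/-- `X ⊆ ω^ω` is Miller measurable: inside every Miller tree there is a Miller
subtree whose body is contained in `X` or disjoint from `X`. -/
def MillerMeasurable (X : Set (ℕ → ℕ)) : Prop :=
  ∀ T : Set (List ℕ), IsMiller T →
    ∃ T' : Set (List ℕ), IsMiller T' ∧ T' ⊆ T ∧ (bodyN T' ⊆ X ∨ bodyN T' ∩ X = ∅)

/-- A family of subsets of Baire space is topologically reasonable if it is closed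
under continuous preimages and under intersections with closed sets. -/
def TopReasonableN (Θ : Set (Set (ℕ → ℕ))) : Prop :=
  (∀ X ∈ Θ, ∀ f : (ℕ → ℕ) → (ℕ → ℕ), Continuous f → f ⁻¹' X ∈ Θ) ∧
  (∀ X ∈ Θ, ∀ C : Set (ℕ → ℕ), IsClosed C → X ∩ C ∈ Θ)

namespace MillerAux

attribute [local instance] Classical.propDecidable

/-- restriction of a branch to a finite sequence -/
def res (x : ℕ → ℕ) (n : ℕ) : List ℕ := List.ofFn fun i : Fin n => x i

@[simp] lemma length_res (x : ℕ → ℕ) (n : ℕ) : (res x n).length = n := by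
  simp [res]

lemma res_succ (x : ℕ → ℕ) (n : ℕ) : res x (n+1) = res x n ++ [x n] := by
  rw [res, List.ofFn_succ', List.concat_eq_append]
  simp [res]

lemma res_prefix (x : ℕ → ℕ) {m n : ℕ} (h : m ≤ n) : res x m <+: res x n := by
  induction n with
  | zero => simp_all [Nat.le_zero.mp h]
  | succ n ih =>
    rcases Nat.lt_or_ge m (n+1) with h' | h'
    · exact (ih (Nat.lt_succ_iff.mp h')).trans (by rw [res_succ]; exact List.prefix_append _ _)
    · have : m = n + 1 := le_antisymm h h'
      simp [this]

lemma res_getElem (x : ℕ → ℕ) {n i : ℕ} (h : i < n) :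
    (res x n)[i]'(by simpa using h) = x i := by
  simp [res]

lemma mem_bodyN {T : Set (List ℕ)} {x : ℕ → ℕ} : x ∈ bodyN T ↔ ∀ n, res x n ∈ T :=
  Iff.rfl

lemma nil_mem {T : Set (List ℕ)} (hT : IsMiller T) : [] ∈ T := by
  obtain ⟨t, ht⟩ := hT.2.1
  simpa using hT.1 t ht 0

noncomputable def kfun (T : Set (List ℕ)) (t : List ℕ) (n : ℕ) : ℕ :=
  if h : (succs T t).Infinite then ((Set.Infinite.natEmbedding _ h) n : ℕ) else 0

lemma kfun_mem {T : Set (List ℕ)} {t : List ℕ} (h : (succs T t).Infinite) (n : ℕ) :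
    kfun T t n ∈ succs T t := by
  simp only [kfun, dif_pos h]; exact ((Set.Infinite.natEmbedding _ h) n).2

lemma kfun_inj {T : Set (List ℕ)} {t : List ℕ} (h : (succs T t).Infinite) :
    Function.Injective (kfun T t) := by
  intro a b hab
  simp only [kfun, dif_pos h] at hab
  exact (Set.Infinite.natEmbedding _ h).injective (Subtype.ext hab)

variable {T : Set (List ℕ)}

noncomputable def sext (hT : IsMiller T) (t : List ℕ) : List ℕ :=
  if h : t ∈ T then (hT.2.2.1 t h).choose else []

lemma sext_prefix (hT : IsMiller T) {t : List ℕ} (ht : t ∈ T) : t <+: sext hT t := by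
  simp only [sext, dif_pos ht]; exact (hT.2.2.1 t ht).choose_spec.1

lemma sext_split (hT : IsMiller T) {t : List ℕ} (ht : t ∈ T) : SplitNodeN T (sext hT t) := by
  simp only [sext, dif_pos ht]; exact (hT.2.2.1 t ht).choose_spec.2

noncomputable def Ego (hT : IsMiller T) : List ℕ → List ℕ
  | [] => sext hT []
  | n :: r => sext hT (Ego hT r ++ [kfun T (Ego hT r) n])

noncomputable def E (hT : IsMiller T) (s : List ℕ) : List ℕ := Ego hT s.reverse

lemma E_concat (hT : IsMiller T) (s : List ℕ) (n : ℕ) :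
    E hT (s ++ [n]) = sext hT (E hT s ++ [kfun T (E hT s) n]) := by
  simp [E, List.reverse_append, Ego]

lemma E_split (hT : IsMiller T) (s : List ℕ) : SplitNodeN T (E hT s) := by
  induction s using List.reverseRecOn with
  | nil => exact sext_split hT (nil_mem hT)
  | append_singleton r m ih =>
    rw [E_concat]
    exact sext_split hT (kfun_mem (hT.2.2.2 _ ih) m)

lemma E_mem (hT : IsMiller T) (s : List ℕ) : E hT s ∈ T := (E_split hT s).1

lemma E_succs_infinite (hT : IsMiller T) (s : List ℕ) : (succs T (E hT s)).Infinite :=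
  hT.2.2.2 _ (E_split hT s)

lemma E_succ_prefix (hT : IsMiller T) (s : List ℕ) (n : ℕ) :
    E hT s ++ [kfun T (E hT s) n] <+: E hT (s ++ [n]) := by
  rw [E_concat]
  exact sext_prefix hT (kfun_mem (E_succs_infinite hT s) n)

lemma E_len_lt (hT : IsMiller T) (s : List ℕ) (n : ℕ) :
    (E hT s).length < (E hT (s ++ [n])).length := by
  have := (E_succ_prefix hT s n).length_le
  simp only [List.length_append, List.length_cons, List.length_nil] at this
  omega

lemma E_mono (hT : IsMiller T) {s s' : List ℕ} (h : s <+: s') : E hT s <+: E hT s' := by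
  induction s' using List.reverseRecOn with
  | nil => simpa [List.prefix_nil.mp h] using List.prefix_refl _
  | append_singleton r m ih =>
    rcases List.prefix_concat_iff.mp h with h' | h'
    · subst h'; exact List.prefix_refl _
    · exact ((ih h').trans (List.prefix_append _ _)).trans (E_succ_prefix hT r m)

lemma length_le_E (hT : IsMiller T) (s : List ℕ) : s.length ≤ (E hT s).length := by
  induction s using List.reverseRecOn with
  | nil => simp
  | append_singleton r m ih =>
    have h1 := E_len_lt hT r m
    have h2 : (r ++ [m]).length = r.length + 1 := by simp
    omega

/-- prefix-reflection of `E` -/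
lemma E_reflect (hT : IsMiller T) {r s : List ℕ} (h : E hT r <+: E hT s) : r <+: s := by
  induction r using List.reverseRecOn with
  | nil => exact List.nil_prefix
  | append_singleton r' m ih =>
    have hr' : E hT r' <+: E hT s :=
      (((List.prefix_append _ _).trans (E_succ_prefix hT r' m)).trans h)
    have hrs := ih hr'
    by_cases hreq : r' = s
    · exfalso
      subst hreq
      have h1 := E_len_lt hT r' m
      have h2 := h.length_le
      omega
    · obtain ⟨rest, hrest⟩ := hrs
      have hne : rest ≠ [] := by rintro rfl; simp at hrest; exact hreq hrest
      obtain ⟨n, tail, rfl⟩ := List.exists_cons_of_ne_nil hne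
      have hpre : r' ++ [n] <+: s := ⟨tail, by simpa using hrest⟩
      have h1 : E hT r' ++ [kfun T (E hT r') m] <+: E hT s :=
        (E_succ_prefix hT r' m).trans h
      have h2 : E hT r' ++ [kfun T (E hT r') n] <+: E hT s :=
        (E_succ_prefix hT r' n).trans (E_mono hT hpre)
      have e1 := h1.getElem (i := (E hT r').length) (by simp)
      have e2 := h2.getElem (i := (E hT r').length) (by simp)
      rw [List.getElem_concat_length rfl (by simp)] at e1 e2
      have : kfun T (E hT r') m = kfun T (E hT r') n := by rw [e1, e2]
      rw [kfun_inj (E_succs_infinite hT r') this]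
      exact hpre

/-- decomposition of nodes below the image of `E` -/
lemma E_decompose (hT : IsMiller T) {s' u : List ℕ} {c : ℕ} (h : u ++ [c] <+: E hT s') :
    (u ++ [c] <+: E hT []) ∨
    ∃ p n, p ++ [n] <+: s' ∧ E hT p <+: u ∧ u ++ [c] <+: E hT (p ++ [n]) := by
  induction s' using List.reverseRecOn with
  | nil => exact Or.inl h
  | append_singleton r m ih =>
    by_cases hlen : (u ++ [c]).length ≤ (E hT r).length
    · have : u ++ [c] <+: E hT r :=
        List.prefix_of_prefix_length_le h (E_mono hT (List.prefix_append _ _)) hlen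
      rcases ih this with h' | ⟨p, n, hp, h2, h3⟩
      · exact Or.inl h'
      · exact Or.inr ⟨p, n, hp.trans (List.prefix_append _ _), h2, h3⟩
    · right
      push_neg at hlen
      have hEru : E hT r <+: u ++ [c] :=
        List.prefix_of_prefix_length_le (E_mono hT (List.prefix_append _ _)) h (le_of_lt hlen)
      have hEru' : E hT r <+: u := by
        apply List.prefix_of_prefix_length_le hEru (List.prefix_append _ _)
        simp at hlen ⊢; omega
      exact ⟨r, m, List.prefix_refl _, hEru', h⟩

/-- the key successor-identification lemma -/
lemma E_succ_ident (hT : IsMiller T) {s s'' : List ℕ} {c : ℕ}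
    (h : E hT s ++ [c] <+: E hT s'') :
    ∃ n, s ++ [n] <+: s'' ∧ c = kfun T (E hT s) n := by
  rcases E_decompose hT h with h' | ⟨p, n, hp, h2, h3⟩
  · exfalso
    have := h'.length_le
    have h2 := (E_mono hT (List.nil_prefix (l := s))).length_le
    simp at this; omega
  · have hps : p <+: s := E_reflect hT h2
    have hspn : s <+: p ++ [n] := E_reflect hT ((List.prefix_append _ _).trans h3)
    have hsp : s = p := by
      rcases List.prefix_concat_iff.mp hspn with h' | h'
      · exfalso
        subst h'
        have := h3.length_le
        simp at this
      · exact h'.eq_of_length (le_antisymm h'.length_le hps.length_le)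
    subst hsp
    refine ⟨n, hp, ?_⟩
    have h4 := E_succ_prefix hT s n
    have e1 := h3.getElem (i := (E hT s).length) (by simp)
    have e2 := h4.getElem (i := (E hT s).length) (by simp)
    rw [List.getElem_concat_length rfl (by simp)] at e1 e2
    rw [e1, e2]

end MillerAux

namespace MillerAux

lemma prefix_concat_eq {u w : List ℕ} {a b : ℕ} (h1 : u ++ [a] <+: w) (h2 : u ++ [b] <+: w) :
    a = b := by
  have e1 := h1.getElem (i := u.length) (by simp)
  have e2 := h2.getElem (i := u.length) (by simp)
  rw [List.getElem_concat_length rfl (by simp)] at e1 e2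
  exact e1.trans e2.symm

lemma mem_of_prefix {S : Set (List ℕ)} (hS : IsTreeN S) {t s : List ℕ}
    (h : t <+: s) (hs : s ∈ S) : t ∈ S := by
  rw [List.prefix_iff_eq_take.mp h]; exact hS s hs _

variable {T : Set (List ℕ)}

/-- the continuous branch map of a Miller tree -/
noncomputable def fmap (hT : IsMiller T) (x : ℕ → ℕ) (n : ℕ) : ℕ :=
  (E hT (res x (n+1))).getD n 0

lemma fmap_continuous (hT : IsMiller T) : Continuous (fmap hT) := by
  apply continuous_pi
  intro n
  have : (fun x => fmap hT x n)
      = (fun v : Fin (n+1) → ℕ => (E hT (List.ofFn v)).getD n 0) ∘ (fun x (i : Fin (n+1)) => x (i : ℕ)) := rfl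
  rw [this]
  exact (continuous_of_discreteTopology).comp (continuous_pi fun i => continuous_apply _)

/-- the subtree of `T` spanned by the `E`-images of elements of `S` -/
def Tim (hT : IsMiller T) (S : Set (List ℕ)) : Set (List ℕ) :=
  {t | ∃ s ∈ S, t <+: E hT s}

lemma Tim_subset (hT : IsMiller T) (S : Set (List ℕ)) : Tim hT S ⊆ T := by
  rintro t ⟨s, _, hpre⟩
  rw [List.prefix_iff_eq_take.mp hpre]
  exact hT.1 _ (E_mem hT s) _

lemma kfun_mem_succs_Tim (hT : IsMiller T) {S : Set (List ℕ)} {s : List ℕ} {n : ℕ}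
    (h : s ++ [n] ∈ S) : kfun T (E hT s) n ∈ succs (Tim hT S) (E hT s) :=
  ⟨s ++ [n], h, E_succ_prefix hT s n⟩

lemma Tim_split (hT : IsMiller T) {S : Set (List ℕ)} (hS : IsMiller S) {u : List ℕ}
    (h : SplitNodeN (Tim hT S) u) : ∃ p, u = E hT p ∧ SplitNodeN S p := by
  obtain ⟨hu, a, b, hab, ha, hb⟩ := h
  obtain ⟨s1, hs1, hpa⟩ := ha
  obtain ⟨s2, hs2, hpb⟩ := hb
  have hstem : ¬ (u ++ [a] <+: E hT []) := by
    intro hstem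
    have h2 : u ++ [b] <+: E hT [] := by
      apply List.prefix_of_prefix_length_le hpb (E_mono hT List.nil_prefix)
      have := hstem.length_le; simp at this ⊢; omega
    exact hab (prefix_concat_eq hstem h2)
  have hstem' : ¬ (u ++ [b] <+: E hT []) := by
    intro hstem'
    apply hstem
    apply List.prefix_of_prefix_length_le hpa (E_mono hT List.nil_prefix)
    have := hstem'.length_le; simp at this ⊢; omega
  rcases E_decompose hT hpa with h' | ⟨p, n, hpn1, hEpu, hA⟩
  · exact absurd h' hstem
  rcases E_decompose hT hpb with h' | ⟨q, m, hqm2, hEqu, hB⟩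
  · exact absurd h' hstem'
  -- the two base splitting nodes coincide
  have hcmp : ∀ {p q : List ℕ} {n m c d : ℕ}, E hT p <+: u → E hT q <+: u →
      u ++ [c] <+: E hT (p ++ [n]) → u ++ [d] <+: E hT (q ++ [m]) →
      (E hT p).length ≤ (E hT q).length → q = p := by
    intro p q n m c d h1 h2 h3 h4 hle
    have hpq : E hT p <+: E hT q := List.prefix_of_prefix_length_le h1 h2 hle
    have hq : E hT q <+: E hT (p ++ [n]) := h2.trans ((List.prefix_append _ _).trans h3)
    rcases List.prefix_concat_iff.mp (E_reflect hT hq) with h' | h'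
    · exfalso
      subst h'
      have l1 := h2.length_le
      have l2 := h3.length_le
      simp only [List.length_append, List.length_cons, List.length_nil] at l2
      omega
    · exact h'.eq_of_length (le_antisymm h'.length_le (E_reflect hT hpq).length_le)
  have hqp : q = p := by
    rcases le_total (E hT p).length (E hT q).length with hle | hle
    · exact hcmp hEpu hEqu hA hB hle
    · exact (hcmp hEqu hEpu hB hA hle).symm
  rw [hqp] at hqm2 hEqu hB
  clear hqp
  have hnm : n ≠ m := by
    rintro rfl
    exact hab (prefix_concat_eq hA hB)
  have huEp : u = E hT p := by
    by_contra hne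
    have hlt : (E hT p).length < u.length :=
      lt_of_le_of_ne hEpu.length_le (fun hl => hne (hEpu.eq_of_length hl).symm)
    have key : ∀ {m' : ℕ}, u <+: E hT (p ++ [m']) →
        u[(E hT p).length]'hlt = kfun T (E hT p) m' := by
      intro m' hm'
      have e1 := hm'.getElem (i := (E hT p).length) hlt
      have e2 := (E_succ_prefix hT p m').getElem (i := (E hT p).length) (by simp)
      rw [List.getElem_concat_length rfl (by simp)] at e2
      exact e1.trans e2.symm
    have gn := key ((List.prefix_append u [a]).trans hA)
    have gm := key ((List.prefix_append u [b]).trans hB)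
    exact hnm (kfun_inj (E_succs_infinite hT p) (gn.symm.trans gm))
  subst huEp
  have haK : a = kfun T (E hT p) n := prefix_concat_eq hA (E_succ_prefix hT p n)
  have hbK : b = kfun T (E hT p) m := prefix_concat_eq hB (E_succ_prefix hT p m)
  refine ⟨p, rfl, mem_of_prefix hS.1 ((List.prefix_append _ _).trans hpn1) hs1, n, m, hnm,
    mem_of_prefix hS.1 hpn1 hs1, mem_of_prefix hS.1 hqm2 hs2⟩

end MillerAux

namespace MillerAux

variable {T : Set (List ℕ)}

lemma Tim_isMiller (hT : IsMiller T) {S : Set (List ℕ)} (hS : IsMiller S) :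
    IsMiller (Tim hT S) := by
  refine ⟨?_, ⟨E hT [], [], nil_mem hS, List.prefix_refl _⟩, ?_, ?_⟩
  · rintro t ⟨s, hs, hp⟩ k
    exact ⟨s, hs, (List.take_prefix _ _).trans hp⟩
  · rintro t ⟨s, hs, hp⟩
    obtain ⟨s', hss', hsS, k, l, hkl, hk, hl⟩ := hS.2.2.1 s hs
    refine ⟨E hT s', hp.trans (E_mono hT hss'),
      ⟨s', hsS, List.prefix_refl _⟩, kfun T (E hT s') k, kfun T (E hT s') l,
      fun hc => hkl (kfun_inj (E_succs_infinite hT s') hc),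
      kfun_mem_succs_Tim hT hk, kfun_mem_succs_Tim hT hl⟩
  · intro u hu
    obtain ⟨p, rfl, hps⟩ := Tim_split hT hS hu
    have hinf := hS.2.2.2 p hps
    apply Set.Infinite.mono _ (hinf.image (kfun_inj (E_succs_infinite hT p)).injOn)
    rintro _ ⟨n, hn, rfl⟩
    exact kfun_mem_succs_Tim hT hn

lemma isMiller_univ : IsMiller (Set.univ : Set (List ℕ)) := by
  refine ⟨fun _ _ _ => trivial, ⟨[], trivial⟩,
    fun t _ => ⟨t, List.prefix_refl _, trivial, 0, 1, by norm_num, trivial, trivial⟩,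
    fun t _ => ?_⟩
  have : succs Set.univ t = Set.univ := by ext k; simp [succs]
  rw [this]; exact Set.infinite_univ

lemma res_getD (y : ℕ → ℕ) {n i : ℕ} (h : i < n) : (res y n).getD i 0 = y i := by
  rw [List.getD_eq_getElem _ _ (by simpa using h)]
  exact res_getElem y h

lemma exists_preimage (hT : IsMiller T) {S : Set (List ℕ)} (hS : IsMiller S)
    {y : ℕ → ℕ} (hy : y ∈ bodyN (Tim hT S)) :
    ∃ x ∈ bodyN S, fmap hT x = y := by
  have hres : ∀ m, res y m ∈ Tim hT S := hy
  have base : E hT [] = res y (E hT []).length := by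
    obtain ⟨s3, hs3, h3⟩ := hres (E hT []).length
    exact (List.prefix_of_prefix_length_le (E_mono hT List.nil_prefix) h3
      (by simp)).eq_of_length (by simp)
  have step : ∀ s, s ∈ S → E hT s = res y (E hT s).length →
      ∃ n, s ++ [n] ∈ S ∧ E hT (s ++ [n]) = res y (E hT (s ++ [n])).length := by
    intro s hsS hInit
    obtain ⟨s'', hs'', h2⟩ := hres ((E hT s).length + 1)
    rw [res_succ] at h2
    rw [← hInit] at h2
    obtain ⟨n, hn1, hn2⟩ := E_succ_ident hT h2
    refine ⟨n, mem_of_prefix hS.1 hn1 hs'', ?_⟩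
    obtain ⟨s3, hs3, h4⟩ := hres (E hT (s ++ [n])).length
    have hML : (E hT s).length + 1 ≤ (E hT (s ++ [n])).length := E_len_lt hT s n
    have h5 : E hT s ++ [y (E hT s).length] <+: E hT s3 := by
      have h6 := (res_prefix y hML).trans h4
      rw [res_succ, ← hInit] at h6
      exact h6
    obtain ⟨n3, hn31, hn32⟩ := E_succ_ident hT h5
    have hn3n : n3 = n := kfun_inj (E_succs_infinite hT s) (hn32.symm.trans hn2)
    subst hn3n
    exact (List.prefix_of_prefix_length_le (E_mono hT hn31) h4 (by simp)).eq_of_length (by simp)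
  classical
  let ch : List ℕ → ℕ := fun s =>
    if h : s ∈ S ∧ E hT s = res y (E hT s).length then (step s h.1 h.2).choose else 0
  let g : ℕ → List ℕ := fun j => Nat.rec [] (fun _ p => p ++ [ch p]) j
  have hgs : ∀ j, g (j+1) = g j ++ [ch (g j)] := fun j => rfl
  have hinv : ∀ j, (g j ∈ S ∧ E hT (g j) = res y (E hT (g j)).length) ∧ (g j).length = j := by
    intro j
    induction j with
    | zero => exact ⟨⟨nil_mem hS, base⟩, rfl⟩
    | succ j ih =>
      rw [hgs]
      have hch : ch (g j) = (step (g j) ih.1.1 ih.1.2).choose := dif_pos ih.1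
      refine ⟨?_, by simp [ih.2]⟩
      rw [hch]
      exact ⟨(step (g j) ih.1.1 ih.1.2).choose_spec.1, (step (g j) ih.1.1 ih.1.2).choose_spec.2⟩
  refine ⟨fun j => ch (g j), ?_, ?_⟩
  · intro m
    have hresx : ∀ j, res (fun j => ch (g j)) j = g j := by
      intro j
      induction j with
      | zero => simp [res, g]
      | succ j ih => rw [res_succ, ih, hgs]
    have := (hinv m).1.1
    rw [← hresx m] at this
    exact this
  · funext n
    have hresx : ∀ j, res (fun j => ch (g j)) j = g j := by
      intro j
      induction j with
      | zero => simp [res, g]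
      | succ j ih => rw [res_succ, ih, hgs]
    have h2 := (hinv (n+1)).1.2
    have h3 : n < (E hT (g (n+1))).length := by
      have := length_le_E hT (g (n+1))
      rw [(hinv (n+1)).2] at this
      omega
    show (E hT (res (fun j => ch (g j)) (n+1))).getD n 0 = y n
    rw [hresx (n+1)]
    conv_lhs => rw [h2]
    exact res_getD y h3

end MillerAux

/-- For a topologically reasonable family `Θ` of subsets of Baire space, every set
in `Θ` is Miller measurable iff for every `X ∈ Θ` there is a single Miller tree
whose body is contained in `X` or disjoint from `X`. -/



theorem millerMeasurable_iff_global (Θ : Set (Set (ℕ → ℕ)))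
    (hΘ : TopReasonableN Θ) :
    (∀ X ∈ Θ, MillerMeasurable X) ↔
      (∀ X ∈ Θ, ∃ T : Set (List ℕ), IsMiller T ∧
        (bodyN T ⊆ X ∨ bodyN T ∩ X = ∅)) := by
  constructor
  · intro h X hX
    obtain ⟨T', hT', _, hbody⟩ := h X hX Set.univ MillerAux.isMiller_univ
    exact ⟨T', hT', hbody⟩
  · intro h X hX T hT
    have hpre : MillerAux.fmap hT ⁻¹' X ∈ Θ := hΘ.1 X hX _ (MillerAux.fmap_continuous hT)
    obtain ⟨S, hS, hbody⟩ := h _ hpre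
    refine ⟨MillerAux.Tim hT S, MillerAux.Tim_isMiller hT hS, MillerAux.Tim_subset hT S, ?_⟩
    rcases hbody with hsub | hdis
    · left
      intro y hy
      obtain ⟨x, hx, rfl⟩ := MillerAux.exists_preimage hT hS hy
      exact hsub hx
    · right
      ext y
      simp only [Set.mem_inter_iff, Set.mem_empty_iff_false, iff_false, not_and]
      intro hy hyX
      obtain ⟨x, hx, rfl⟩ := MillerAux.exists_preimage hT hS hy
      exact (Set.eq_empty_iff_forall_notMem.mp hdis x) ⟨hx, hyX⟩
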